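/- Key step in EA for MES: for an arrival order π = (1,…,n), if player i (arriving at position i) delays to arrive right after player j > i (others keeping order), the difference in i's total share between truthful and delayed arrival is at least (1/j)·(v({1,…,j}∖{i}) − v({1,…,i−1})), which is non-negative by monotonicity. -/

import Mathlib

lemma mes_prefix_subset (i j : ℕ) (h1i : 1 ≤ i) (hij : i ≤ j) :
    Finset.Icc 1 (i - 1) ⊆ (Finset.Icc 1 j).erase i := by
  intro x hx
  simp only [Finset.mem_Icc] at hx
  have hxi : x < i := lt_of_le_of_lt hx.2 (Nat.sub_lt h1i one_pos)
  simp only [Finset.mem_erase, Finset.mem_Icc]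
  exact ⟨Nat.ne_of_lt hxi, hx.1, le_trans (le_of_lt hxi) hij⟩

lemma mes_sum_lb (v : Finset ℕ → ℝ)
    (hmono : ∀ S T : Finset ℕ, S ⊆ T → v S ≤ v T)
    (i : ℕ) (h1i : 1 ≤ i) :
    ∀ j, i ≤ j →
      (v (Finset.Icc 1 j) - v (Finset.Icc 1 (i - 1))) / (j : ℝ)
        ≤ ∑ k ∈ Finset.Icc i j,
            (v (Finset.Icc 1 k) - v (Finset.Icc 1 (k - 1))) / (k : ℝ) := by
  intro j hj
  induction j, hj using Nat.le_induction with
  | base => simp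
  | succ m hm ih =>
    have hm1 : (1 : ℕ) ≤ m := le_trans h1i hm
    have hmpos : (0 : ℝ) < (m : ℝ) := by exact_mod_cast hm1
    have hm1pos : (0 : ℝ) < (m : ℝ) + 1 := by linarith
    rw [Finset.sum_Icc_succ_top (le_trans hm (Nat.le_succ m))]
    have hsub : Finset.Icc 1 (i - 1) ⊆ Finset.Icc 1 m :=
      Finset.Icc_subset_Icc le_rfl (le_trans (Nat.sub_le i 1) hm)
    have hnn : 0 ≤ v (Finset.Icc 1 m) - v (Finset.Icc 1 (i - 1)) :=
      sub_nonneg.mpr (hmono _ _ hsub)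
    have h1 : (v (Finset.Icc 1 m) - v (Finset.Icc 1 (i - 1))) / ((m : ℝ) + 1)
        ≤ (v (Finset.Icc 1 m) - v (Finset.Icc 1 (i - 1))) / (m : ℝ) := by
      gcongr
      linarith
    have hsucc : ((m + 1 : ℕ) : ℝ) = (m : ℝ) + 1 := by push_cast; ring
    have hpred : (m + 1) - 1 = m := rfl
    rw [hsucc, hpred]
    have hsplit : (v (Finset.Icc 1 (m + 1)) - v (Finset.Icc 1 (i - 1))) / ((m : ℝ) + 1)
        = (v (Finset.Icc 1 (m + 1)) - v (Finset.Icc 1 m)) / ((m : ℝ) + 1)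
          + (v (Finset.Icc 1 m) - v (Finset.Icc 1 (i - 1))) / ((m : ℝ) + 1) := by
      field_simp
      ring
    linarith [ih]

theorem mes_ea_key_step (v : Finset ℕ → ℝ)
    (hnorm : v ∅ = 0)
    (hmono : ∀ S T : Finset ℕ, S ⊆ T → v S ≤ v T)
    (n i j : ℕ) (h1i : 1 ≤ i) (hij : i < j) (hjn : j ≤ n) :
    ((∑ k ∈ Finset.Icc i j,
        (v (Finset.Icc 1 k) - v (Finset.Icc 1 (k - 1))) / (k : ℝ))
      - (v (Finset.Icc 1 j) - v ((Finset.Icc 1 j).erase i)) / (j : ℝ)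
      ≥ (1 / (j : ℝ)) * (v ((Finset.Icc 1 j).erase i) - v (Finset.Icc 1 (i - 1))))
    ∧ 0 ≤ (1 / (j : ℝ)) * (v ((Finset.Icc 1 j).erase i) - v (Finset.Icc 1 (i - 1))) := by
  have hj1 : (1 : ℕ) ≤ j := le_trans h1i (le_of_lt hij)
  have hjpos : (0 : ℝ) < (j : ℝ) := by exact_mod_cast hj1
  have hsum := mes_sum_lb v hmono i h1i j (le_of_lt hij)
  have hsub := mes_prefix_subset i j h1i (le_of_lt hij)
  have hnn : 0 ≤ v ((Finset.Icc 1 j).erase i) - v (Finset.Icc 1 (i - 1)) :=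
    sub_nonneg.mpr (hmono _ _ hsub)
  constructor
  · have : (1 / (j : ℝ)) * (v ((Finset.Icc 1 j).erase i) - v (Finset.Icc 1 (i - 1)))
        + (v (Finset.Icc 1 j) - v ((Finset.Icc 1 j).erase i)) / (j : ℝ)
        = (v (Finset.Icc 1 j) - v (Finset.Icc 1 (i - 1))) / (j : ℝ) := by
      field_simp
      ring
    linarith
  · positivity
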